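/- Let f(z) = z + a₂z² + a₃z³ + ⋯ be analytic and univalent on the unit disk with inverse extending analytically to the unit disk as g, and suppose both Re(f'(z)) > β for all z ∈ 𝕌 and Re(g'(w)) > β for all w ∈ 𝕌, where 1/3 ≤ β < 1. Then |a₂| ≤ 1 − β. -/

import Mathlib

open Metric Complex

/-- If `f` is bi-univalent with inverse extension `g`, `Re f' > β` and `Re g' > β` on
the unit disk with `1/3 ≤ β < 1`, then `|a₂| ≤ 1 - β`. -/
theorem a2_bound_re_deriv_large_beta
    (f g : ℂ → ℂ)
    (hf : AnalyticOnNhd ℂ f (ball (0 : ℂ) 1)) (hfinj : Set.InjOn f (ball (0 : ℂ) 1))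
    (hf0 : f 0 = 0) (hf1 : deriv f 0 = 1)
    (hg : AnalyticOnNhd ℂ g (ball (0 : ℂ) 1)) (hginj : Set.InjOn g (ball (0 : ℂ) 1))
    (hgf : ∀ᶠ z in nhds (0 : ℂ), g (f z) = z)
    (beta : ℝ) (hbeta : 1/3 ≤ beta ∧ beta < 1)
    (hfre : ∀ z ∈ ball (0 : ℂ) 1, beta < (deriv f z).re)
    (hgre : ∀ w ∈ ball (0 : ℂ) 1, beta < (deriv g w).re)
    (a₂ : ℂ) (ha₂ : a₂ = iteratedDeriv 2 f 0 / 2) :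
    ‖a₂‖ ≤ 1 - beta := by
  obtain ⟨hb1, hb2⟩ := hbeta
  set h : ℂ → ℂ := deriv f with hh
  have hha : AnalyticOnNhd ℂ h (ball (0 : ℂ) 1) := hf.deriv
  set c : ℂ := ((2 * beta - 1 : ℝ) : ℂ) with hc
  have hmem0 : (0 : ℂ) ∈ ball (0 : ℂ) 1 := by simp
  have hne : ∀ z ∈ ball (0 : ℂ) 1, h z - c ≠ 0 := by
    intro z hz hcon
    have hre : beta < (h z).re := hfre z hz
    have : (h z - c).re = 0 := by rw [hcon]; simp
    have hcre : c.re = 2 * beta - 1 := by simp [hc]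
    simp only [Complex.sub_re] at this
    rw [hcre] at this
    linarith
  set φ : ℂ → ℂ := fun z => (h z - 1) / (h z - c) with hφ
  have hφd : DifferentiableOn ℂ φ (ball (0 : ℂ) 1) :=
    DifferentiableOn.div ((hha.differentiableOn).sub (differentiableOn_const 1))
      ((hha.differentiableOn).sub (differentiableOn_const c)) hne
  have hmaps : Set.MapsTo φ (ball (0 : ℂ) 1) (ball (0 : ℂ) 1) := by
    intro z hz
    have hre : beta < (h z).re := hfre z hz
    have hden : (0 : ℝ) < ‖h z - c‖ := norm_pos_iff.2 (hne z hz)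
    simp only [mem_ball, dist_zero_right, hφ]
    rw [norm_div, div_lt_one hden]
    have e1 : ‖h z - 1‖ ^ 2 = ((h z).re - 1) ^ 2 + ((h z).im) ^ 2 := by
      rw [Complex.sq_norm, Complex.normSq_apply]
      simp [Complex.sub_re, Complex.sub_im]; ring
    have e2 : ‖h z - c‖ ^ 2 = ((h z).re - (2 * beta - 1)) ^ 2 + ((h z).im) ^ 2 := by
      rw [Complex.sq_norm, Complex.normSq_apply]
      simp [Complex.sub_re, Complex.sub_im, hc]; ring
    nlinarith [norm_nonneg (h z - 1), norm_nonneg (h z - c)]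
  have hφ0 : φ 0 = 0 := by
    show (h 0 - 1) / (h 0 - c) = 0
    rw [hf1, sub_self, zero_div]
  have hder : deriv φ 0 = deriv h 0 / (1 - c) := by
    have h1 : DifferentiableAt ℂ h 0 := (hha 0 hmem0).differentiableAt
    have hd1 : DifferentiableAt ℂ (fun z => h z - 1) 0 := h1.sub_const 1
    have hd2 : DifferentiableAt ℂ (fun z => h z - c) 0 := h1.sub_const c
    have h0 : h 0 = 1 := hf1
    have hne0 : h 0 - c ≠ 0 := hne 0 hmem0
    rw [hφ]
    rw [deriv_fun_div hd1 hd2 hne0]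
    rw [deriv_sub_const, deriv_sub_const, h0]
    have h1c : (1 : ℂ) - c ≠ 0 := by rwa [h0] at hne0
    field_simp
    ring
  have hschwarz : ‖deriv φ 0‖ ≤ 1 := by
    have := Complex.norm_deriv_le_div_of_mapsTo_ball hφd (by rw [hφ0]; exact hmaps.mono_right ball_subset_closedBall) one_pos
    rw [div_one] at this
    exact this
  have h1c : ‖(1 : ℂ) - c‖ = 2 - 2 * beta := by
    have : (1 : ℂ) - c = ((2 - 2 * beta : ℝ) : ℂ) := by
      rw [hc]; push_cast; ring
    rw [this, Complex.norm_real, Real.norm_eq_abs, abs_of_pos (by linarith)]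
  have hbound : ‖deriv h 0‖ ≤ 2 - 2 * beta := by
    rw [hder, norm_div, h1c, div_le_one (by linarith)] at hschwarz
    linarith
  have hit : iteratedDeriv 2 f 0 = deriv h 0 := by
    rw [show (2:ℕ) = 1 + 1 from rfl, iteratedDeriv_succ, iteratedDeriv_one]
  rw [ha₂, hit, norm_div]
  have h2 : ‖(2 : ℂ)‖ = 2 := by norm_num
  rw [h2, div_le_iff₀ (by norm_num : (0:ℝ) < 2)]
  linarith
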